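/- Work in R' = K[X] ⧸ (X^n − T^δ·X) as in the context, with n ≥ 2 and δ > 0, and with 𝒳 ⊆ R' as in the context. Then for every x ∈ 𝒳 the element 1 + x is a unit of R'; moreover there exists y ∈ 𝒳 with (1 + x)·(1 + y) = 1 (the inverse is given by the geometric series 1 − x + x² − ⋯). -/

import Mathlib

open Polynomial

noncomputable section NovikovAux

open HahnSeries HahnSeries.SummableFamily Finset

namespace NovikovAux

/-! ### Powers summable family without `IsDomain` -/

variable {Γ R : Type*} [AddCommMonoid Γ] [LinearOrder Γ] [IsOrderedCancelAddMonoid Γ] [CommRing R]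

theorem isPWO_iUnion_support_powers'
    {x : HahnSeries Γ R} (hx : 0 < x.orderTop) : (⋃ n : ℕ, (x ^ n).support).IsPWO := by
  apply (x.isWF_support.isPWO.addSubmonoid_closure _).mono _
  · exact fun g hg => WithTop.coe_le_coe.1
      (le_trans (le_of_lt hx) (orderTop_le_of_coeff_ne_zero hg))
  refine Set.iUnion_subset fun n => ?_
  induction' n with n ih <;> intro g hn
  · rw [pow_zero] at hn
    have hg0 : g = 0 := by
      by_contra hne
      exact hn (by rw [HahnSeries.coeff_one, if_neg hne])
    rw [hg0, SetLike.mem_coe]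
    exact AddSubmonoid.zero_mem _
  · obtain ⟨i, hi, j, hj, rfl⟩ := support_mul_subset hn
    exact SetLike.mem_coe.2 (AddSubmonoid.add_mem _ (ih hi) (AddSubmonoid.subset_closure hj))

/-- The powers of an element of positive valuation form a summable family. -/
@[simps]
noncomputable def powers' (x : HahnSeries Γ R) (hx : 0 < x.orderTop) :
    SummableFamily Γ R ℕ where
  toFun n := x ^ n
  isPWO_iUnion_support' := isPWO_iUnion_support_powers' hx
  finite_co_support' g := by
    have hpwo := isPWO_iUnion_support_powers' hx
    by_cases hg : g ∈ ⋃ n : ℕ, { g | (x ^ n).coeff g ≠ 0 }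
    swap; · exact Set.finite_empty.subset fun n hn => hg (Set.mem_iUnion.2 ⟨n, hn⟩)
    apply hpwo.isWF.induction hg
    intro y ys hy
    refine
      ((((addAntidiagonal x.isPWO_support hpwo y).finite_toSet.biUnion fun ij hij =>
                    hy ij.snd ?_ ?_).image
                Nat.succ).union
            (Set.finite_singleton 0)).subset
        ?_
    · exact (mem_addAntidiagonal.1 (mem_coe.1 hij)).2.1
    · obtain ⟨hi, _, rfl⟩ := mem_addAntidiagonal.1 (mem_coe.1 hij)
      rw [← zero_add ij.snd, ← add_assoc, add_zero]
      exact
        add_lt_add_left (WithTop.coe_lt_coe.1 (hx.trans_le (orderTop_le_of_coeff_ne_zero hi)))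
          _
    · rintro (_ | n) hn
      · exact Set.mem_union_right _ (Set.mem_singleton 0)
      · obtain ⟨i, hi, j, hj, rfl⟩ := support_mul_subset hn
        refine Set.mem_union_left _ ⟨n, Set.mem_iUnion.2 ⟨⟨j, i⟩, Set.mem_iUnion.2 ⟨?_, hi⟩⟩, rfl⟩
        exact Finset.mem_coe.2 (Finset.mem_antidiagonal.2 ⟨hj, Set.mem_iUnion.2 ⟨n, hi⟩, add_comm j i⟩)

variable {x : HahnSeries Γ R} (hx : 0 < x.orderTop)

theorem embDomain_succ_smul_powers' :
    (x • powers' x hx).embDomain ⟨Nat.succ, Nat.succ_injective⟩ =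
      powers' x hx - SummableFamily.ofFinsupp (Finsupp.single 0 1) := by
  apply SummableFamily.ext
  rintro (_ | n)
  · rw [SummableFamily.embDomain_notin_range]
    · simp [powers'_toFun]
    · rintro ⟨i, hi⟩
      exact i.succ_ne_zero hi
  · refine Eq.trans (embDomain_image _ ⟨Nat.succ, Nat.succ_injective⟩) ?_
    rw [SummableFamily.coe_sub, Pi.sub_apply, SummableFamily.coe_ofFinsupp,
      Finsupp.single_eq_of_ne n.succ_ne_zero, sub_zero, powers'_toFun, pow_succ']
    rw [SummableFamily.smul_apply, powers'_toFun, HahnSeries.of_symm_smul_of_eq_mul]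

theorem one_sub_self_mul_hsum_powers' : (1 - x) * (powers' x hx).hsum = 1 := by
  rw [← hsum_smul, sub_smul 1 x (powers' x hx), one_smul, hsum_sub, ←
    hsum_embDomain (x • powers' x hx) ⟨Nat.succ, Nat.succ_injective⟩, embDomain_succ_smul_powers']
  simp

/-! ### The coefficient ring `Qn = ℚ[U]/(U^n - U)` and the map into `HahnSeries ℝ Qn` -/

variable (n : ℕ) (δ : ℝ)

abbrev Qn : Type := AdjoinRoot ((X : ℚ[X]) ^ n - X)

/-- root of `U^n - U` -/
abbrev un : Qn n := AdjoinRoot.root _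

/-- The coefficientwise embedding `HahnSeries ℝ ℚ →+* HahnSeries ℝ (Qn n)`. -/
def fR : HahnSeries ℝ ℚ →+* HahnSeries ℝ (Qn n) where
  toFun a := a.map (algebraMap ℚ (Qn n))
  map_zero' := by ext g; simp
  map_one' := by
    ext g
    simp [HahnSeries.coeff_one, apply_ite (algebraMap ℚ (Qn n))]
  map_add' a b := by ext g; simp
  map_mul' a b := HahnSeries.map_mul ((algebraMap ℚ (Qn n)).toNonUnitalRingHom) (x := a) (y := b)

theorem fR_coeff (a : HahnSeries ℝ ℚ) (r : ℝ) :
    (fR n a).coeff r = algebraMap ℚ (Qn n) (a.coeff r) := rfl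

theorem fR_single (a : ℝ) (q : ℚ) :
    fR n (single a q) = single a (algebraMap ℚ (Qn n) q) := by
  ext g
  rw [fR_coeff, HahnSeries.coeff_single, HahnSeries.coeff_single]
  split_ifs <;> simp

/-- the image of `X`: `T^{δ/(n-1)} · u`. -/
def vX : HahnSeries ℝ (Qn n) := single (δ / ((n : ℝ) - 1)) (un n)

theorem un_pow (hn : 2 ≤ n) : (un n) ^ n = un n := by
  have h0 : AdjoinRoot.mk ((X : ℚ[X]) ^ n - X) ((X : ℚ[X]) ^ n - X) = 0 :=
    AdjoinRoot.mk_self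
  have : (un n) ^ n - un n = 0 := by
    simpa [map_sub, map_pow, AdjoinRoot.mk_X] using h0
  exact sub_eq_zero.1 this

theorem hrel (hn : 2 ≤ n) (hδ : 0 < δ) :
    ((X : Polynomial (HahnSeries ℝ ℚ)) ^ n - Polynomial.C (HahnSeries.single δ (1 : ℚ)) * X).eval₂
      (fR n) (vX n δ) = 0 := by
  have hne : ((n : ℝ) - 1) ≠ 0 := by
    have h2 : (2 : ℝ) ≤ (n : ℝ) := by exact_mod_cast hn
    linarith
  rw [eval₂_sub, eval₂_mul, eval₂_C, eval₂_pow, eval₂_X, vX, single_pow, un_pow n hn,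
    fR_single, map_one, single_mul_single, one_mul, nsmul_eq_mul]
  have harith : (n : ℝ) * (δ / ((n : ℝ) - 1)) = δ + δ / ((n : ℝ) - 1) := by
    field_simp
    ring
  rw [harith, sub_self]

/-! ### The filtration on `Qn` and positivity -/

/-- span of the powers `u^m` with `m·γ < r`. -/
def Qfil (γ r : ℝ) : Submodule ℚ (Qn n) :=
  Submodule.span ℚ {q | ∃ m : ℕ, (m : ℝ) * γ < r ∧ q = (un n) ^ m}

/-- positivity predicate for elements of `HahnSeries ℝ (Qn n)`. -/
def Pos (γ : ℝ) (w : HahnSeries ℝ (Qn n)) : Prop := ∀ r : ℝ, w.coeff r ∈ Qfil n γ r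

theorem Qfil_mul_le {γ r₁ r₂ : ℝ} : Qfil n γ r₁ * Qfil n γ r₂ ≤ Qfil n γ (r₁ + r₂) := by
  rw [Qfil, Qfil, Submodule.span_mul_span]
  refine Submodule.span_le.2 ?_
  rintro _ ⟨q₁, ⟨m₁, h₁, rfl⟩, q₂, ⟨m₂, h₂, rfl⟩, rfl⟩
  refine Submodule.subset_span ⟨m₁ + m₂, ?_, (pow_add _ _ _).symm⟩
  push_cast
  linarith

theorem Pos.zero {γ : ℝ} : Pos n γ 0 := fun r => by
  simp only [HahnSeries.coeff_zero]; exact Submodule.zero_mem _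

theorem Pos.neg {γ : ℝ} {w : HahnSeries ℝ (Qn n)} (h : Pos n γ w) : Pos n γ (-w) := fun r => by
  rw [HahnSeries.coeff_neg]; exact Submodule.neg_mem _ (h r)

theorem Pos.mul {γ : ℝ} {w₁ w₂ : HahnSeries ℝ (Qn n)} (h₁ : Pos n γ w₁) (h₂ : Pos n γ w₂) :
    Pos n γ (w₁ * w₂) := by
  intro r
  rw [HahnSeries.coeff_mul]
  refine Submodule.sum_mem _ ?_
  rintro ⟨r₁, r₂⟩ hij
  have hsum : r₁ + r₂ = r := (mem_addAntidiagonal.1 hij).2.2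
  have := Qfil_mul_le n (Submodule.mul_mem_mul (h₁ r₁) (h₂ r₂))
  rwa [hsum] at this

theorem Pos.pow {γ : ℝ} {w : HahnSeries ℝ (Qn n)} (h : Pos n γ w) {k : ℕ} (hk : 1 ≤ k) :
    Pos n γ (w ^ k) := by
  induction k with
  | zero => omega
  | succ m ih =>
    rcases Nat.eq_or_lt_of_le hk with h1 | h1
    · rw [← h1, pow_one]; exact h
    · rw [pow_succ]
      exact Pos.mul n (ih (by omega)) h

theorem Pos.coeff_eq_zero {γ : ℝ} (hγ : 0 < γ) {w : HahnSeries ℝ (Qn n)} (h : Pos n γ w)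
    {r : ℝ} (hr : r ≤ 0) : w.coeff r = 0 := by
  have hempty : {q : Qn n | ∃ m : ℕ, (m : ℝ) * γ < r ∧ q = (un n) ^ m} = ∅ := by
    ext q
    simp only [Set.mem_setOf_eq, Set.mem_empty_iff_false, iff_false]
    rintro ⟨m, hm, -⟩
    have : (0 : ℝ) ≤ (m : ℝ) * γ := mul_nonneg (Nat.cast_nonneg m) hγ.le
    linarith
  have := h r
  rw [Qfil, hempty, Submodule.span_empty, Submodule.mem_bot] at this
  exact this

theorem Pos.support_subset {γ : ℝ} (hγ : 0 < γ) {w : HahnSeries ℝ (Qn n)} (h : Pos n γ w) :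
    w.support ⊆ Set.Ioi 0 := by
  intro r hr
  by_contra hle
  exact hr (h.coeff_eq_zero n hγ (not_lt.1 hle))

theorem Pos.orderTop_pos {γ : ℝ} (hγ : 0 < γ) {w : HahnSeries ℝ (Qn n)} (h : Pos n γ w) :
    0 < w.orderTop := by
  rcases eq_or_ne w 0 with rfl | hw
  · simp
  · rw [HahnSeries.zero_lt_orderTop_iff hw]
    exact h.support_subset n hγ (HahnSeries.coeff_order_eq_zero.not.mpr hw)

theorem Pos.hsum {γ : ℝ} {s : SummableFamily ℝ (Qn n) ℕ} (h : ∀ k, Pos n γ (s k)) :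
    Pos n γ s.hsum := by
  intro r
  rw [SummableFamily.coeff_hsum]
  rw [finsum_eq_sum _ (s.finite_co_support r)]
  exact Submodule.sum_mem _ fun k _ => h k r

/-! ### Power basis of `Qn` -/

theorem QnMonic (hn : 2 ≤ n) : ((X : ℚ[X]) ^ n - X).Monic := by
  apply monic_X_pow_sub
  rw [degree_X]
  exact_mod_cast (by omega : 1 < n)

theorem QnDeg (hn : 2 ≤ n) : ((X : ℚ[X]) ^ n - X).natDegree = n := by
  rw [natDegree_sub_eq_left_of_natDegree_lt, natDegree_X_pow]
  rw [natDegree_X, natDegree_X_pow]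
  omega

def pb (hn : 2 ≤ n) : PowerBasis ℚ (Qn n) := AdjoinRoot.powerBasis' (QnMonic n hn)

theorem pb_dim (hn : 2 ≤ n) : (pb n hn).dim = n := by
  rw [pb, AdjoinRoot.powerBasis'_dim, QnDeg n hn]

theorem pb_basis (hn : 2 ≤ n) (m : Fin (pb n hn).dim) :
    (pb n hn).basis m = (un n) ^ (m : ℕ) := by
  rw [(pb n hn).coe_basis]
  rfl

theorem sum_smul_un_pow_eq_zero (hn : 2 ≤ n) (c : ℕ → ℚ)
    (h : ∑ m ∈ Finset.range n, c m • (un n) ^ m = 0) : ∀ m < n, c m = 0 := by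
  have hdim : (pb n hn).dim = n := pb_dim n hn
  have h2 : ∑ m : Fin (pb n hn).dim, c m • (pb n hn).basis m = 0 := by
    calc ∑ m : Fin (pb n hn).dim, c m • (pb n hn).basis m
        = ∑ m : Fin (pb n hn).dim, (fun k : ℕ => c k • (un n) ^ k) (m : ℕ) := by
          refine Finset.sum_congr rfl fun m _ => by rw [pb_basis]
      _ = ∑ m ∈ Finset.range (pb n hn).dim, c m • (un n) ^ m :=
          Fin.sum_univ_eq_sum_range (fun k : ℕ => c k • (un n) ^ k) (pb n hn).dim
      _ = 0 := by rw [hdim]; exact h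
  intro m hm
  exact Fintype.linearIndependent_iff.1 (pb n hn).basis.linearIndependent
    (fun j => c j) h2 ⟨m, by rw [hdim]; exact hm⟩

theorem un_pow_mem (hn : 2 ≤ n) {γ : ℝ} (hγ : 0 < γ) {r : ℝ} :
    ∀ m : ℕ, (m : ℝ) * γ < r →
      (un n) ^ m ∈ Submodule.span ℚ
        ((pb n hn).basis '' {j : Fin (pb n hn).dim | (j : ℝ) * γ < r}) := by
  intro m
  induction m using Nat.strong_induction_on with
  | _ m ih =>
    intro hm
    by_cases h : m < n
    · refine Submodule.subset_span ⟨⟨m, by rw [pb_dim n hn]; exact h⟩, ?_, ?_⟩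
      · simpa using hm
      · rw [pb_basis]
    · push_neg at h
      have hrw : (un n) ^ m = (un n) ^ (m - n + 1) := by
        have hmn : m = (m - n) + n := (Nat.sub_add_cancel h).symm
        calc (un n) ^ m = (un n) ^ (m - n) * (un n) ^ n := by rw [← _root_.pow_add, ← hmn]
          _ = (un n) ^ (m - n) * un n := by rw [un_pow n hn]
          _ = (un n) ^ (m - n + 1) := by rw [pow_succ]
      rw [hrw]
      refine ih (m - n + 1) (by omega) ?_
      have hle : ((m - n + 1 : ℕ) : ℝ) ≤ (m : ℝ) := by
        exact_mod_cast (by omega : m - n + 1 ≤ m)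
      nlinarith [mul_le_mul_of_nonneg_right hle hγ.le]

theorem pos_repr_eq_zero (hn : 2 ≤ n) {γ : ℝ} (hγ : 0 < γ) {w : HahnSeries ℝ (Qn n)}
    (h : Pos n γ w) (r : ℝ) (m : Fin (pb n hn).dim) (hm : ¬ ((m : ℝ) * γ < r)) :
    (pb n hn).basis.repr (w.coeff r) m = 0 := by
  have hmem : w.coeff r ∈ Submodule.span ℚ
      ((pb n hn).basis '' {j : Fin (pb n hn).dim | (j : ℝ) * γ < r}) := by
    refine Submodule.span_le.2 ?_ (h r)
    rintro _ ⟨k, hk, rfl⟩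
    exact un_pow_mem n hn hγ k hk
  have hsub := Module.Basis.repr_support_subset_of_mem_span (pb n hn).basis _ hmem
  by_contra h0
  exact hm (hsub (Finsupp.mem_support_iff.2 h0))

/-! ### Coefficient computations for `eval₂` -/

theorem mul_single_coeff' (w : HahnSeries ℝ (Qn n)) (b : ℝ) (q : Qn n) (r : ℝ) :
    (w * single b q).coeff r = w.coeff (r - b) * q := by
  have h := HahnSeries.coeff_mul_single_add (r := q) (x := w) (a := r - b) (b := b)
  rwa [sub_add_cancel] at h

theorem term_coeff (a : HahnSeries ℝ ℚ) (i : ℕ) (r : ℝ) :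
    (fR n a * (vX n δ) ^ i).coeff r
      = (a.coeff (r - i * (δ / ((n : ℝ) - 1)))) • (un n) ^ i := by
  rw [vX, single_pow, mul_single_coeff', fR_coeff,
    show ((i : ℕ) • (δ / ((n : ℝ) - 1))) = (i : ℝ) * (δ / ((n : ℝ) - 1)) from nsmul_eq_mul i _]
  exact (Algebra.smul_def _ _).symm

theorem pos_eval₂ (p : Polynomial (HahnSeries ℝ ℚ))
    (hp : ∀ i, (p.coeff i).support ⊆ Set.Ioi (0 : ℝ)) :
    Pos n (δ / ((n : ℝ) - 1)) (p.eval₂ (fR n) (vX n δ)) := by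
  intro r
  rw [eval₂_eq_sum, Polynomial.sum]
  have hc := map_sum (HahnSeries.coeff.addMonoidHom (Γ := ℝ) (R := Qn n) r)
    (fun i => fR n (p.coeff i) * vX n δ ^ i) p.support
  simp only [coeff.addMonoidHom_apply] at hc
  rw [hc]
  refine Submodule.sum_mem _ fun i _ => ?_
  rw [term_coeff]
  by_cases h0 : (p.coeff i).coeff (r - i * (δ / ((n : ℝ) - 1))) = 0
  · rw [h0, zero_smul]; exact Submodule.zero_mem _
  · have hpos : (0 : ℝ) < r - i * (δ / ((n : ℝ) - 1)) := hp i h0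
    exact Submodule.smul_mem _ _ (Submodule.subset_span ⟨i, by linarith, rfl⟩)

theorem eval₂_coeff_lt (hn : 2 ≤ n) (p : Polynomial (HahnSeries ℝ ℚ))
    (hp : p.natDegree < n) (r : ℝ) :
    (p.eval₂ (fR n) (vX n δ)).coeff r
      = ∑ m ∈ Finset.range n,
          ((p.coeff m).coeff (r - m * (δ / ((n : ℝ) - 1)))) • (un n) ^ m := by
  conv_lhs => rw [p.as_sum_range' n hp]
  rw [eval₂_finset_sum]
  have hc := map_sum (HahnSeries.coeff.addMonoidHom (Γ := ℝ) (R := Qn n) r)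
    (fun i => ((monomial i) (p.coeff i)).eval₂ (fR n) (vX n δ)) (Finset.range n)
  simp only [coeff.addMonoidHom_apply] at hc
  rw [hc]
  refine Finset.sum_congr rfl fun m _ => ?_
  rw [eval₂_monomial, term_coeff]

theorem eval₂_eq_zero (hn : 2 ≤ n) (p : Polynomial (HahnSeries ℝ ℚ))
    (hdeg : p.natDegree < n) (h : p.eval₂ (fR n) (vX n δ) = 0) : p = 0 := by
  refine Polynomial.ext fun i => ?_
  by_cases hi : i < n
  swap
  · rw [Polynomial.coeff_eq_zero_of_natDegree_lt (by omega), Polynomial.coeff_zero]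
  · rw [Polynomial.coeff_zero]
    ext κ
    rw [HahnSeries.coeff_zero]
    have h0 := congrArg (fun w => HahnSeries.coeff w (κ + i * (δ / ((n : ℝ) - 1)))) h
    simp only [HahnSeries.coeff_zero] at h0
    rw [eval₂_coeff_lt n δ hn p hdeg] at h0
    have := sum_smul_un_pow_eq_zero n hn
      (fun m => (p.coeff m).coeff (κ + i * (δ / ((n : ℝ) - 1)) - m * (δ / ((n : ℝ) - 1)))) h0 i hi
    simpa using this

/-! ### Construction of the inverse representative -/

variable {n}

/-- the `m`-th coordinate Hahn series of `z`, shifted by `-mγ`. -/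
def zc (hn : 2 ≤ n) (γ : ℝ) (z : HahnSeries ℝ (Qn n)) (m : Fin (pb n hn).dim) :
    HahnSeries ℝ ℚ where
  coeff κ := (pb n hn).basis.repr (z.coeff (κ + m * γ)) m
  isPWO_support' := by
    refine ((z.isPWO_support.image_of_monotone
      (f := fun t => t - m * γ) fun a b hab => by simpa using hab).mono ?_)
    intro κ hκ
    have hz : z.coeff (κ + m * γ) ≠ 0 := by
      intro h0
      apply hκ
      simp [h0]
    exact ⟨κ + m * γ, hz, by ring⟩

theorem zc_coeff (hn : 2 ≤ n) (γ : ℝ) (z : HahnSeries ℝ (Qn n)) (m : Fin (pb n hn).dim)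
    (κ : ℝ) : (zc hn γ z m).coeff κ = (pb n hn).basis.repr (z.coeff (κ + m * γ)) m := rfl

theorem zc_support (hn : 2 ≤ n) {γ : ℝ} (hγ : 0 < γ) {z : HahnSeries ℝ (Qn n)}
    (hz : Pos n γ z) (m : Fin (pb n hn).dim) :
    (zc hn γ z m).support ⊆ Set.Ioi (0 : ℝ) := by
  intro κ hκ
  by_contra hle
  refine hκ ?_
  rw [zc_coeff]
  refine pos_repr_eq_zero n hn hγ hz _ m ?_
  simp only [Set.mem_Ioi, not_lt] at hle
  nlinarith [hγ]

/-- the polynomial representative of the inverse part. -/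
def yPoly (hn : 2 ≤ n) (γ : ℝ) (z : HahnSeries ℝ (Qn n)) : Polynomial (HahnSeries ℝ ℚ) :=
  ∑ m : Fin (pb n hn).dim, C (zc hn γ z m) * X ^ (m : ℕ)

theorem yPoly_coeff (hn : 2 ≤ n) (γ : ℝ) (z : HahnSeries ℝ (Qn n)) (i : ℕ) :
    (yPoly hn γ z).coeff i
      = if h : i < (pb n hn).dim then zc hn γ z ⟨i, h⟩ else 0 := by
  rw [yPoly, finset_sum_coeff]
  have hterm : ∀ j : Fin (pb n hn).dim,
      (C (zc hn γ z j) * X ^ (j : ℕ)).coeff i = if i = (j : ℕ) then zc hn γ z j else 0 := by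
    intro j
    rw [coeff_C_mul, coeff_X_pow]
    split_ifs <;> simp
  simp only [hterm]
  split_ifs with h
  · rw [Finset.sum_eq_single (⟨i, h⟩ : Fin (pb n hn).dim)]
    · simp
    · intro j _ hj
      rw [if_neg]
      intro hij
      exact hj (Fin.ext hij.symm)
    · intro hmem
      exact absurd (Finset.mem_univ _) hmem
  · refine Finset.sum_eq_zero fun j _ => ?_
    rw [if_neg]
    intro hij
    exact h (hij ▸ j.isLt)

theorem yPoly_natDegree (hn : 2 ≤ n) (γ : ℝ) (z : HahnSeries ℝ (Qn n)) :
    (yPoly hn γ z).natDegree < n := by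
  have hb : (yPoly hn γ z).natDegree ≤ n - 1 := by
    refine natDegree_le_iff_coeff_eq_zero.2 fun N hN => ?_
    rw [yPoly_coeff, dif_neg]
    rw [pb_dim n hn]
    omega
  omega

theorem eval₂_yPoly (hn : 2 ≤ n) (hδ : 0 < δ) {z : HahnSeries ℝ (Qn n)}
    (hz : Pos n (δ / ((n : ℝ) - 1)) z) :
    (yPoly hn (δ / ((n : ℝ) - 1)) z).eval₂ (fR n) (vX n δ) = z := by
  set γ := δ / ((n : ℝ) - 1) with hγdef
  ext r
  rw [eval₂_coeff_lt n δ hn _ (yPoly_natDegree hn γ z) r]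
  set F : ℕ → Qn n := fun m => ((yPoly hn γ z).coeff m).coeff (r - m * γ) • (un n) ^ m with hF
  have hFm : ∀ m : Fin (pb n hn).dim,
      F (m : ℕ) = (pb n hn).basis.repr (z.coeff r) m • (pb n hn).basis m := by
    intro m
    rw [hF]
    simp only
    rw [yPoly_coeff, dif_pos m.isLt, pb_basis, zc_coeff]
    congr 2
    · congr 1
      · congr 1
        ring
  calc ∑ m ∈ Finset.range n, F m
      = ∑ m ∈ Finset.range (pb n hn).dim, F m := by rw [pb_dim n hn]
    _ = ∑ m : Fin (pb n hn).dim, F (m : ℕ) := (Fin.sum_univ_eq_sum_range F _).symm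
    _ = ∑ m : Fin (pb n hn).dim,
          (pb n hn).basis.repr (z.coeff r) m • (pb n hn).basis m :=
        Finset.sum_congr rfl fun m _ => hFm m
    _ = z.coeff r := (pb n hn).basis.sum_repr (z.coeff r)

theorem lift_eq_zero (hn : 2 ≤ n) (hδ : 0 < δ)
    (a : AdjoinRoot ((X : Polynomial (HahnSeries ℝ ℚ)) ^ n - Polynomial.C (HahnSeries.single δ (1 : ℚ)) * X))
    (ha : AdjoinRoot.lift (fR n) (vX n δ) (hrel n δ hn hδ) a = 0) : a = 0 := by
  obtain ⟨p, rfl⟩ := AdjoinRoot.mk_surjective a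
  have hlt1 : degree (Polynomial.C (HahnSeries.single δ (1 : ℚ)) * X) < (n : WithBot ℕ) := by
    calc degree (Polynomial.C (HahnSeries.single δ (1 : ℚ)) * X) ≤ 1 := degree_C_mul_X_le _
      _ < (n : WithBot ℕ) := by exact_mod_cast (by omega : 1 < n)
  have hmonic : ((X : Polynomial (HahnSeries ℝ ℚ)) ^ n
      - Polynomial.C (HahnSeries.single δ (1 : ℚ)) * X).Monic := monic_X_pow_sub hlt1
  have hq : AdjoinRoot.mk ((X : Polynomial (HahnSeries ℝ ℚ)) ^ n
        - Polynomial.C (HahnSeries.single δ (1 : ℚ)) * X)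
        (p %ₘ ((X : Polynomial (HahnSeries ℝ ℚ)) ^ n - Polynomial.C (HahnSeries.single δ (1 : ℚ)) * X))
      = AdjoinRoot.mk _ p := by
    conv_rhs => rw [← modByMonic_add_div p ((X : Polynomial (HahnSeries ℝ ℚ)) ^ n
      - Polynomial.C (HahnSeries.single δ (1 : ℚ)) * X)]
    rw [map_add, map_mul, AdjoinRoot.mk_self, zero_mul, add_zero]
  rw [← hq] at ha ⊢
  rw [AdjoinRoot.lift_mk] at ha
  rcases eq_or_ne (p %ₘ ((X : Polynomial (HahnSeries ℝ ℚ)) ^ n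
      - Polynomial.C (HahnSeries.single δ (1 : ℚ)) * X)) 0 with h0 | h0
  · rw [h0, map_zero]
  · have hdeg : (p %ₘ ((X : Polynomial (HahnSeries ℝ ℚ)) ^ n
        - Polynomial.C (HahnSeries.single δ (1 : ℚ)) * X)).natDegree < n := by
      refine (natDegree_lt_iff_degree_lt h0).2 ?_
      have h1 := degree_modByMonic_lt p hmonic
      have h2 : ((X : Polynomial (HahnSeries ℝ ℚ)) ^ n
          - Polynomial.C (HahnSeries.single δ (1 : ℚ)) * X).degree = (n : WithBot ℕ) := by
        rw [degree_sub_eq_left_of_degree_lt, degree_X_pow]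
        rw [degree_X_pow]
        exact hlt1
      rw [h2] at h1
      exact h1
    rw [eval₂_eq_zero n δ hn _ hdeg ha, map_zero]

end NovikovAux

/-- The set `𝒳` of elements of `R' = K[X]/(X^n - T^δ·X)` (with `K = HahnSeries ℝ ℚ` the
universal Novikov field and `T^δ = single δ 1`) that are images of polynomials of degree
at most `n` all of whose coefficients are Hahn series supported in `(0, ∞)`; these are
the elements `Σ rᵢ s^{dᵢ} T^{κᵢ}` with `0 ≤ dᵢ ≤ n` and `κᵢ > 0` of the paper. -/
def posSupportSet (n : ℕ) (δ : ℝ) :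
    Set (AdjoinRoot ((X : Polynomial (HahnSeries ℝ ℚ)) ^ n
      - C (HahnSeries.single δ (1 : ℚ)) * X)) :=
  { z | ∃ p : Polynomial (HahnSeries ℝ ℚ), p.natDegree ≤ n ∧
      (∀ i, (p.coeff i).support ⊆ Set.Ioi (0 : ℝ)) ∧
      AdjoinRoot.mk ((X : Polynomial (HahnSeries ℝ ℚ)) ^ n
        - C (HahnSeries.single δ (1 : ℚ)) * X) p = z }

/-- For every `x ∈ 𝒳`, the element `1 + x` is a unit of `R' = K[X]/(X^n - T^δ·X)`, with
inverse of the form `1 + y` for some `y ∈ 𝒳` (given by the geometric series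
`1 - x + x² - ⋯`).  (Used in §2.1 of the paper.) -/
theorem one_add_posSupport_isUnit (n : ℕ) (hn : 2 ≤ n) (δ : ℝ) (hδ : 0 < δ)
    (x : AdjoinRoot ((X : Polynomial (HahnSeries ℝ ℚ)) ^ n
      - C (HahnSeries.single δ (1 : ℚ)) * X))
    (hx : x ∈ posSupportSet n δ) :
    IsUnit (1 + x) ∧ ∃ y ∈ posSupportSet n δ, (1 + x) * (1 + y) = 1 := by
  classical
  obtain ⟨p, hpdeg, hpsupp, hpx⟩ := hx
  have hγ : 0 < δ / ((n : ℝ) - 1) := by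
    apply div_pos hδ
    have h2 : (2 : ℝ) ≤ (n : ℝ) := by exact_mod_cast hn
    linarith
  set γ := δ / ((n : ℝ) - 1) with hγdef
  set Φ := AdjoinRoot.lift (NovikovAux.fR n) (NovikovAux.vX n δ)
    (NovikovAux.hrel n δ hn hδ) with hΦ
  have hΦx : Φ x = p.eval₂ (NovikovAux.fR n) (NovikovAux.vX n δ) := by
    rw [hΦ, ← hpx, AdjoinRoot.lift_mk]
  have hw : NovikovAux.Pos n γ (Φ x) := by
    rw [hΦx]; exact NovikovAux.pos_eval₂ n δ p hpsupp
  have hneg : NovikovAux.Pos n γ (-(Φ x)) := NovikovAux.Pos.neg n hw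
  have horder : 0 < (-(Φ x)).orderTop := NovikovAux.Pos.orderTop_pos n hγ hneg
  set fam := NovikovAux.powers' (-(Φ x)) horder
    - HahnSeries.SummableFamily.ofFinsupp (Finsupp.single 0 1) with hfam
  set z := fam.hsum with hzdef
  have hfamk : ∀ k, NovikovAux.Pos n γ (fam k) := by
    intro k
    have happ : fam k = (NovikovAux.powers' (-(Φ x)) horder) k
        - (Finsupp.single (0 : ℕ) (1 : HahnSeries ℝ (NovikovAux.Qn n))) k := by
      rw [hfam, HahnSeries.SummableFamily.coe_sub, Pi.sub_apply,
        HahnSeries.SummableFamily.coe_ofFinsupp]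
    cases k with
    | zero =>
      have h0 : fam 0 = 0 := by
        rw [happ, NovikovAux.powers'_toFun, pow_zero, Finsupp.single_eq_same, sub_self]
      rw [h0]
      exact NovikovAux.Pos.zero n
    | succ m =>
      have h1 : fam (m + 1) = (-(Φ x)) ^ (m + 1) := by
        rw [happ, NovikovAux.powers'_toFun,
          Finsupp.single_eq_of_ne (Nat.succ_ne_zero m), sub_zero]
      rw [h1]
      exact NovikovAux.Pos.pow n hneg (by omega)
  have hzPos : NovikovAux.Pos n γ z := NovikovAux.Pos.hsum n hfamk
  have hzsum : 1 + z = (NovikovAux.powers' (-(Φ x)) horder).hsum := by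
    rw [hzdef, hfam, HahnSeries.SummableFamily.hsum_sub,
      HahnSeries.SummableFamily.hsum_ofFinsupp, Finsupp.sum_single_index]
    · simp
    · rfl
  have hinv : (1 + Φ x) * (1 + z) = 1 := by
    rw [hzsum]
    have h := NovikovAux.one_sub_self_mul_hsum_powers' horder
    rwa [sub_neg_eq_add] at h
  set q := NovikovAux.yPoly (n := n) hn γ z with hqdef
  set y := AdjoinRoot.mk ((X : Polynomial (HahnSeries ℝ ℚ)) ^ n
    - Polynomial.C (HahnSeries.single δ (1 : ℚ)) * X) q with hy
  have hΦy : Φ y = z := by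
    rw [hy, hΦ, AdjoinRoot.lift_mk, hqdef]
    exact NovikovAux.eval₂_yPoly δ hn hδ hzPos
  have hymem : y ∈ posSupportSet n δ := by
    refine ⟨q, (NovikovAux.yPoly_natDegree hn γ z).le, ?_, hy.symm⟩
    intro i
    rw [hqdef, NovikovAux.yPoly_coeff]
    split_ifs with h
    · exact NovikovAux.zc_support hn hγ hzPos _
    · simp
  have heq : (1 + x) * (1 + y) = 1 := by
    have h0 : Φ ((1 + x) * (1 + y) - 1) = 0 := by
      rw [map_sub, map_mul, map_add, map_add, map_one, hΦy, hinv, sub_self]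
    have h1 := NovikovAux.lift_eq_zero δ hn hδ _ h0
    rw [sub_eq_zero] at h1
    exact h1
  exact ⟨IsUnit.of_mul_eq_one _ heq, y, hymem, heq⟩
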